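/- Let U, V ∈ ℝ^{n×r} have orthonormal columns and satisfy assumption A1 with parameter μ₀. Let Z = UXᵀ + YVᵀ with UᵀY = 0, where the rows of X and Y satisfy ‖X^i‖² ≤ c₁²μ₀r/n and ‖Y^j‖² ≤ c₂²μ₀r/n for all i, j. Let Ω be generated by a d-regular bipartite graph whose biadjacency matrix G satisfies G1 and G2 with constant C. Then ‖(n/d)·P_Ω(Z) − Z‖ ≤ (c₁ + c₂)·C·μ₀·r/√d, where ‖·‖ is the spectral norm. -/

import Mathlib

open Matrix
open scoped BigOperators

noncomputable section

/-- Euclidean norm of a vector. -/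
def vecNorm {β : Type*} [Fintype β] (x : β → ℝ) : ℝ :=
  Real.sqrt (∑ i, x i ^ 2)

/-- Spectral norm (largest singular value) of a real matrix. -/
def specNorm {α β : Type*} [Fintype α] [Fintype β] (A : Matrix α β ℝ) : ℝ :=
  sSup {c | ∃ x : β → ℝ, vecNorm x ≤ 1 ∧ c = vecNorm (A.mulVec x)}

/-- Second largest singular value of a real matrix (Courant–Fischer characterization). -/
def sigma2 {α β : Type*} [Fintype α] [Fintype β] (A : Matrix α β ℝ) : ℝ :=
  ⨅ v : β → ℝ, sSup {c | ∃ x : β → ℝ,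
    vecNorm x ≤ 1 ∧ (∑ i, v i * x i) = 0 ∧ c = vecNorm (A.mulVec x)}

/-- Frobenius norm. -/
def frobNorm {α β : Type*} [Fintype α] [Fintype β] (A : Matrix α β ℝ) : ℝ :=
  Real.sqrt (∑ i, ∑ j, A i j ^ 2)

/-- The square root of a positive semidefinite matrix, as `Matrix.PosSemidef.sqrt` was
defined in the older Mathlib. -/
def posSemidefSqrt {n : Type*} [Fintype n] [DecidableEq n] {A : Matrix n n ℝ}
    (hA : A.PosSemidef) : Matrix n n ℝ :=
  hA.1.eigenvectorUnitary.1 * diagonal ((↑) ∘ Real.sqrt ∘ hA.1.eigenvalues) *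
    (star hA.1.eigenvectorUnitary : Matrix n n ℝ)

/-- Nuclear norm: the sum of the singular values, i.e. the trace of `√(AᵀA)`. -/
def nuclearNorm {α β : Type*} [Fintype α] [Fintype β] [DecidableEq β]
    (A : Matrix α β ℝ) : ℝ :=
  (posSemidefSqrt (Matrix.posSemidef_conjTranspose_mul_self A)).trace

/-- The sampling operator `P_Ω`. -/
def sampl {n : ℕ} (Ω : Finset (Fin n × Fin n)) (M : Matrix (Fin n) (Fin n) ℝ) :
    Matrix (Fin n) (Fin n) ℝ :=
  Matrix.of fun i j => if (i, j) ∈ Ω then M i j else 0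

/-- The biadjacency matrix `G` of the bipartite graph with edge set `Ω`. -/
def biadj {n : ℕ} (Ω : Finset (Fin n × Fin n)) : Matrix (Fin n) (Fin n) ℝ :=
  Matrix.of fun i j => if (i, j) ∈ Ω then (1 : ℝ) else 0

/-- `Ω` is the edge set of a `d`-regular bipartite graph: every row and every column
of `G` has exactly `d` ones. -/
def RegularSampling {n : ℕ} (Ω : Finset (Fin n × Fin n)) (d : ℕ) : Prop :=
  (∀ i : Fin n, (Finset.univ.filter fun j => (i, j) ∈ Ω).card = d) ∧
  (∀ j : Fin n, (Finset.univ.filter fun i => (i, j) ∈ Ω).card = d)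

/-- Assumption G1: the all-ones vector is a top left- and right-singular vector of `G`,
with `σ₁(G) = d`. -/
def AssumptionG1 {n : ℕ} (Ω : Finset (Fin n × Fin n)) (d : ℕ) : Prop :=
  specNorm (biadj Ω) = d ∧
  (biadj Ω).mulVec (fun _ => 1) = (fun _ => (d : ℝ)) ∧
  Matrix.vecMul (fun _ => 1) (biadj Ω) = (fun _ => (d : ℝ))

/-- Assumption G2: `σ₂(G) ≤ C·√d`. -/
def AssumptionG2 {n : ℕ} (Ω : Finset (Fin n × Fin n)) (d : ℕ) (C : ℝ) : Prop :=
  sigma2 (biadj Ω) ≤ C * Real.sqrt d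

/-- Assumption A1 (`μ₀`-incoherence) for one factor: every row `U^i` satisfies
`‖U^i‖² ≤ μ₀ r / n`. -/
def IncoherentRows {n r : ℕ} (U : Matrix (Fin n) (Fin r) ℝ) (μ₀ : ℝ) : Prop :=
  ∀ i : Fin n, (∑ k, U i k ^ 2) ≤ μ₀ * r / n

/-- Assumption A2 (strong incoherence with parameter `δ`) for one factor:
for every `S` with `|S| = d`, `‖(n/d)·∑_{k∈S} U^k (U^k)ᵀ − I‖ ≤ δ`. -/
def StrongIncoherence {n r : ℕ} (U : Matrix (Fin n) (Fin r) ℝ) (d : ℕ) (δ : ℝ) : Prop :=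
  ∀ S : Finset (Fin n), S.card = d →
    specNorm (((n : ℝ) / (d : ℝ)) • (∑ k ∈ S, Matrix.vecMulVec (U k) (U k)) - 1) ≤ δ

/-- `M = U · diagonal s · Vᵀ` is a thin SVD of the rank-`r` matrix `M`. -/
def IsThinSVD {n r : ℕ} (M : Matrix (Fin n) (Fin n) ℝ)
    (U : Matrix (Fin n) (Fin r) ℝ) (s : Fin r → ℝ) (V : Matrix (Fin n) (Fin r) ℝ) : Prop :=
  Uᵀ * U = 1 ∧ Vᵀ * V = 1 ∧ (∀ i, 0 < s i) ∧ M = U * Matrix.diagonal s * Vᵀ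

/-- The projection `P_T` onto the subspace `T` spanned by matrices `UXᵀ` and `YVᵀ`. -/
def projT {n r : ℕ} (U V : Matrix (Fin n) (Fin r) ℝ) (Z : Matrix (Fin n) (Fin n) ℝ) :
    Matrix (Fin n) (Fin n) ℝ :=
  U * Uᵀ * Z + Z * (V * Vᵀ) - U * Uᵀ * Z * (V * Vᵀ)

/-- The projection `P_{T⊥}` onto the orthogonal complement of `T`. -/
def projTperp {n r : ℕ} (U V : Matrix (Fin n) (Fin r) ℝ) (Z : Matrix (Fin n) (Fin n) ℝ) :
    Matrix (Fin n) (Fin n) ℝ :=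
  (1 - U * Uᵀ) * Z * (1 - V * Vᵀ)

end

namespace Aux

def dotp {β : Type*} [Fintype β] (x y : β → ℝ) : ℝ := ∑ i, x i * y i



lemma vecNorm_nonneg {β : Type*} [Fintype β] (x : β → ℝ) : 0 ≤ vecNorm x :=
  Real.sqrt_nonneg _

lemma vecNorm_sq {β : Type*} [Fintype β] (x : β → ℝ) :
    vecNorm x ^ 2 = ∑ i, x i ^ 2 :=
  Real.sq_sqrt (Finset.sum_nonneg fun i _ => sq_nonneg _)

lemma sum_sq_le_one {β : Type*} [Fintype β] {x : β → ℝ} (h : vecNorm x ≤ 1) :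
    ∑ i, x i ^ 2 ≤ 1 := by
  have := vecNorm_sq x
  nlinarith [vecNorm_nonneg x]

lemma vecNorm_eq_zero {β : Type*} [Fintype β] {x : β → ℝ} (h : vecNorm x = 0) :
    x = 0 := by
  have hs : ∑ i, x i ^ 2 = 0 := by
    have h2 : Real.sqrt (∑ i, x i ^ 2) = 0 := h
    have hnn : (0:ℝ) ≤ ∑ i, x i ^ 2 := Finset.sum_nonneg fun i _ => sq_nonneg _
    nlinarith [Real.sq_sqrt hnn]
  funext i
  have := (Finset.sum_eq_zero_iff_of_nonneg (fun i _ => sq_nonneg (x i))).1 hs i (Finset.mem_univ i)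
  exact pow_eq_zero_iff (n := 2) (by norm_num) |>.1 this

lemma vecNorm_smul {β : Type*} [Fintype β] (c : ℝ) (x : β → ℝ) :
    vecNorm (c • x) = |c| * vecNorm x := by
  unfold vecNorm
  rw [← Real.sqrt_sq_eq_abs, ← Real.sqrt_mul (sq_nonneg c), Finset.mul_sum]
  refine congrArg Real.sqrt ?_
  refine Finset.sum_congr rfl fun i _ => ?_
  simp [Pi.smul_apply, smul_eq_mul]; ring

lemma cs_abs {β : Type*} [Fintype β] (x y : β → ℝ) :
    |dotp x y| ≤ vecNorm x * vecNorm y := by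
  have h := Finset.sum_mul_sq_le_sq_mul_sq Finset.univ x y
  have h2 : (dotp x y) ^ 2 ≤ (vecNorm x * vecNorm y) ^ 2 := by
    rw [mul_pow, vecNorm_sq, vecNorm_sq]; exact h
  have hnn := mul_nonneg (vecNorm_nonneg x) (vecNorm_nonneg y)
  have := abs_le_of_sq_le_sq' h2 hnn
  exact abs_le.2 this

lemma dotp_le {β : Type*} [Fintype β] (x y : β → ℝ) :
    dotp x y ≤ vecNorm x * vecNorm y :=
  le_trans (le_abs_self _) (cs_abs x y)

/-- Cauchy–Schwarz over the index set, for nonneg sequences given as sqrt-products. -/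
lemma sum_sqrt_prod_le {γ : Type*} [Fintype γ] (f g : γ → ℝ)
    (hf : ∀ k, 0 ≤ f k) (hg : ∀ k, 0 ≤ g k) :
    ∑ k, Real.sqrt (f k) * Real.sqrt (g k) ≤
      Real.sqrt (∑ k, f k) * Real.sqrt (∑ k, g k) := by
  have h := Finset.sum_mul_sq_le_sq_mul_sq Finset.univ
      (fun k => Real.sqrt (f k)) (fun k => Real.sqrt (g k))
  simp only [Real.sq_sqrt (hf _), Real.sq_sqrt (hg _)] at h
  have hnn : 0 ≤ ∑ k, Real.sqrt (f k) * Real.sqrt (g k) :=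
    Finset.sum_nonneg fun k _ => mul_nonneg (Real.sqrt_nonneg _) (Real.sqrt_nonneg _)
  calc ∑ k, Real.sqrt (f k) * Real.sqrt (g k)
      = Real.sqrt ((∑ k, Real.sqrt (f k) * Real.sqrt (g k)) ^ 2) := (Real.sqrt_sq hnn).symm
    _ ≤ Real.sqrt ((∑ k, f k) * ∑ k, g k) := Real.sqrt_le_sqrt h
    _ = _ := Real.sqrt_mul (Finset.sum_nonneg fun k _ => hf k) _


variable {α β : Type*} [Fintype α] [Fintype β]

lemma vecNorm_zero : vecNorm (0 : β → ℝ) = 0 := by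
  unfold vecNorm; simp

lemma vecNorm_le_of_sq_le {x : β → ℝ} {b : ℝ} (hb : 0 ≤ b)
    (h : ∑ i, x i ^ 2 ≤ b ^ 2) : vecNorm x ≤ b := by
  unfold vecNorm
  calc Real.sqrt (∑ i, x i ^ 2) ≤ Real.sqrt (b ^ 2) := Real.sqrt_le_sqrt h
    _ = b := Real.sqrt_sq hb

lemma frob_bound (A : Matrix α β ℝ) (x : β → ℝ) :
    vecNorm (A.mulVec x) ≤ Real.sqrt (∑ i, ∑ j, A i j ^ 2) * vecNorm x := by
  have hfr : 0 ≤ Real.sqrt (∑ i, ∑ j, A i j ^ 2) := Real.sqrt_nonneg _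
  refine vecNorm_le_of_sq_le (mul_nonneg hfr (vecNorm_nonneg x)) ?_
  rw [mul_pow, vecNorm_sq, Real.sq_sqrt (by positivity : (0:ℝ) ≤ ∑ i, ∑ j, A i j ^ 2)]
  have key : ∀ i, (A.mulVec x i) ^ 2 ≤ (∑ j, A i j ^ 2) * ∑ j, x j ^ 2 := by
    intro i
    have := Finset.sum_mul_sq_le_sq_mul_sq Finset.univ (A i) x
    simpa [Matrix.mulVec, dotProduct] using this
  calc ∑ i, (A.mulVec x i) ^ 2 ≤ ∑ i, (∑ j, A i j ^ 2) * ∑ j, x j ^ 2 :=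
        Finset.sum_le_sum fun i _ => key i
    _ = (∑ i, ∑ j, A i j ^ 2) * ∑ j, x j ^ 2 := by rw [Finset.sum_mul]

lemma specSet_nonempty (A : Matrix α β ℝ) :
    Set.Nonempty {c | ∃ x : β → ℝ, vecNorm x ≤ 1 ∧ c = vecNorm (A.mulVec x)} :=
  ⟨vecNorm (A.mulVec 0), 0, by rw [vecNorm_zero]; norm_num, rfl⟩

lemma specSet_bddAbove (A : Matrix α β ℝ) :
    BddAbove {c | ∃ x : β → ℝ, vecNorm x ≤ 1 ∧ c = vecNorm (A.mulVec x)} := by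
  refine ⟨Real.sqrt (∑ i, ∑ j, A i j ^ 2), fun c hc => ?_⟩
  obtain ⟨x, hx, rfl⟩ := hc
  calc vecNorm (A.mulVec x) ≤ Real.sqrt (∑ i, ∑ j, A i j ^ 2) * vecNorm x := frob_bound A x
    _ ≤ Real.sqrt (∑ i, ∑ j, A i j ^ 2) * 1 :=
        mul_le_mul_of_nonneg_left hx (Real.sqrt_nonneg _)
    _ = _ := mul_one _

lemma specNorm_le_of (A : Matrix α β ℝ) {B : ℝ} (hB : 0 ≤ B)
    (h : ∀ x : β → ℝ, vecNorm x ≤ 1 → vecNorm (A.mulVec x) ≤ B) :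
    specNorm A ≤ B := by
  refine csSup_le (specSet_nonempty A) ?_
  rintro c ⟨x, hx, rfl⟩
  exact h x hx

lemma mulVec_le_of_specNorm (A : Matrix α β ℝ) [DecidableEq β] {s : ℝ}
    (hA : specNorm A = s) (x : β → ℝ) :
    vecNorm (A.mulVec x) ≤ s * vecNorm x := by
  rcases eq_or_lt_of_le (vecNorm_nonneg x) with h0 | hpos
  · have := vecNorm_eq_zero h0.symm
    subst this
    rw [Matrix.mulVec_zero, vecNorm_zero, ← h0, mul_zero]
  · set u := (vecNorm x)⁻¹ • x with hu
    have hun : vecNorm u = 1 := by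
      rw [hu, vecNorm_smul, abs_of_pos (inv_pos.2 hpos), inv_mul_cancel₀ (ne_of_gt hpos)]
    have hmem : vecNorm (A.mulVec u) ∈
        {c | ∃ x : β → ℝ, vecNorm x ≤ 1 ∧ c = vecNorm (A.mulVec x)} :=
      ⟨u, le_of_eq hun, rfl⟩
    have hle : vecNorm (A.mulVec u) ≤ s := by
      rw [← hA]; exact le_csSup (specSet_bddAbove A) hmem
    have : A.mulVec u = (vecNorm x)⁻¹ • A.mulVec x := by
      rw [hu, Matrix.mulVec_smul]
    rw [this, vecNorm_smul, abs_of_pos (inv_pos.2 hpos)] at hle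
    calc vecNorm (A.mulVec x) = vecNorm x * ((vecNorm x)⁻¹ * vecNorm (A.mulVec x)) := by
          field_simp
      _ ≤ vecNorm x * s := mul_le_mul_of_nonneg_left hle (le_of_lt hpos)
      _ = s * vecNorm x := mul_comm _ _


variable {n : ℕ}

/-- The constrained sup in the definition of `sigma2`. -/
noncomputable def csup (A : Matrix (Fin n) (Fin n) ℝ) (v : Fin n → ℝ) : ℝ :=
  sSup {c | ∃ x : Fin n → ℝ,
    vecNorm x ≤ 1 ∧ (∑ i, v i * x i) = 0 ∧ c = vecNorm (A.mulVec x)}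

lemma csupSet_nonempty (A : Matrix (Fin n) (Fin n) ℝ) (v : Fin n → ℝ) :
    Set.Nonempty {c | ∃ x : Fin n → ℝ,
      vecNorm x ≤ 1 ∧ (∑ i, v i * x i) = 0 ∧ c = vecNorm (A.mulVec x)} :=
  ⟨vecNorm (A.mulVec 0), 0, by rw [vecNorm_zero]; norm_num, by simp, rfl⟩

lemma csupSet_bddAbove (A : Matrix (Fin n) (Fin n) ℝ) (v : Fin n → ℝ) :
    BddAbove {c | ∃ x : Fin n → ℝ,
      vecNorm x ≤ 1 ∧ (∑ i, v i * x i) = 0 ∧ c = vecNorm (A.mulVec x)} := by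
  refine ⟨Real.sqrt (∑ i, ∑ j, A i j ^ 2), fun c hc => ?_⟩
  obtain ⟨x, hx, -, rfl⟩ := hc
  calc vecNorm (A.mulVec x) ≤ Real.sqrt (∑ i, ∑ j, A i j ^ 2) * vecNorm x := frob_bound A x
    _ ≤ Real.sqrt (∑ i, ∑ j, A i j ^ 2) * 1 :=
        mul_le_mul_of_nonneg_left hx (Real.sqrt_nonneg _)
    _ = _ := mul_one _

lemma sigma2_eq (A : Matrix (Fin n) (Fin n) ℝ) : sigma2 A = ⨅ v : Fin n → ℝ, csup A v := rfl

/-- Courant–Fischer step. -/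
lemma csup_one_le (hn : 0 < n) {d : ℕ} (Ω : Finset (Fin n × Fin n))
    (hG1 : AssumptionG1 Ω d) (v : Fin n → ℝ) :
    csup (biadj Ω) (fun _ => (1:ℝ)) ≤ csup (biadj Ω) v := by
  set G := biadj Ω with hGdef
  refine csSup_le (csupSet_nonempty G _) ?_
  rintro c ⟨w, hw1, hw0, rfl⟩
  have hsumw : ∑ i, w i = 0 := by simpa using hw0
  have hnR : (0:ℝ) < n := by exact_mod_cast hn
  set e : Fin n → ℝ := fun _ => 1 / Real.sqrt n with he
  have hsq : Real.sqrt n ^ 2 = n := Real.sq_sqrt (le_of_lt hnR)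
  have hsn : (0:ℝ) < Real.sqrt n := Real.sqrt_pos.2 hnR
  have hesq : ∀ i : Fin n, e i ^ 2 = 1 / (n:ℝ) := by
    intro i
    show (1 / Real.sqrt n) ^ 2 = 1 / (n:ℝ)
    rw [div_pow, one_pow, hsq]
  have hse : ∑ i : Fin n, e i ^ 2 = 1 := by
    rw [Finset.sum_congr rfl fun i _ => hesq i, Finset.sum_const, Finset.card_univ,
      Fintype.card_fin, nsmul_eq_mul]
    field_simp
  have hGe : G.mulVec e = fun _ => (d : ℝ) / Real.sqrt n := by
    have hee : e = (1 / Real.sqrt n) • (fun _ => (1:ℝ)) := by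
      funext i; simp [he, smul_eq_mul]
    rw [hee, Matrix.mulVec_smul, hG1.2.1]
    funext j; simp [smul_eq_mul]; ring
  set g := G.mulVec w with hg
  have hsumg : ∑ j, g j = 0 := by
    have h1 := Matrix.dotProduct_mulVec (fun _ => (1:ℝ)) G w
    have h2 : (fun _ => (1:ℝ)) ⬝ᵥ g = (fun _ => (d:ℝ)) ⬝ᵥ w := by
      rw [hg, h1, hG1.2.2]
    simp only [dotProduct, one_mul] at h2
    rw [h2, ← Finset.mul_sum, hsumw, mul_zero]
  have hdeg : ∑ i, e i * g i = 0 := by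
    have hterm : ∀ i, e i * g i = (1 / Real.sqrt n) * g i := fun i => rfl
    rw [Finset.sum_congr rfl fun i _ => hterm i, ← Finset.mul_sum, hsumg, mul_zero]
  have hdew : ∑ i, e i * w i = 0 := by
    have hterm : ∀ i, e i * w i = (1 / Real.sqrt n) * w i := fun i => rfl
    rw [Finset.sum_congr rfl fun i _ => hterm i, ← Finset.mul_sum, hsumw, mul_zero]
  have hgd : vecNorm g ≤ d := by
    calc vecNorm g ≤ (d:ℝ) * vecNorm w := mulVec_le_of_specNorm G hG1.1 w
      _ ≤ (d:ℝ) * 1 := mul_le_mul_of_nonneg_left hw1 (Nat.cast_nonneg d)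
      _ = d := mul_one _
  set p := ∑ i, v i * w i with hp
  set q := ∑ i, v i * e i with hq
  by_cases hp0 : p = 0
  · exact le_csSup (csupSet_bddAbove G v) ⟨w, hw1, hp0, rfl⟩
  · set ρ := Real.sqrt (p^2 + q^2) with hρ
    have hρpos : 0 < ρ := Real.sqrt_pos.2 (by positivity)
    have hρsq : ρ^2 = p^2 + q^2 := Real.sq_sqrt (by positivity)
    set a := p / ρ with ha
    set b := - q / ρ with hb
    have hab : a^2 + b^2 = 1 := by
      rw [ha, hb]
      field_simp
      linarith [hρsq]
    set x := fun i => a * e i + b * w i with hx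
    have hdotvx : ∑ i, v i * x i = 0 := by
      have hterm : ∀ i, v i * x i = a * (v i * e i) + b * (v i * w i) := by
        intro i; simp only [hx]; ring
      rw [Finset.sum_congr rfl fun i _ => hterm i, Finset.sum_add_distrib,
        ← Finset.mul_sum, ← Finset.mul_sum, ← hq, ← hp, ha, hb]
      field_simp
      ring
    have hxs : ∑ i, x i ^ 2 = a^2 + b^2 * ∑ i, w i ^ 2 := by
      have hterm : ∀ i, x i ^ 2 =
          a^2 * e i ^2 + (2*a*b) * (e i * w i) + b^2 * w i ^2 := by
        intro i; simp only [hx]; ring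
      have h1 : ∑ i, a^2 * e i ^2 = a^2 := by
        rw [← Finset.mul_sum, hse, mul_one]
      have h2 : ∑ i, (2*a*b) * (e i * w i) = 0 := by
        rw [← Finset.mul_sum, hdew, mul_zero]
      have h3 : ∑ i, b^2 * w i ^2 = b^2 * ∑ i, w i ^2 := by
        rw [← Finset.mul_sum]
      rw [Finset.sum_congr rfl fun i _ => hterm i, Finset.sum_add_distrib,
        Finset.sum_add_distrib, h1, h2, h3]
      ring
    have hxnorm : vecNorm x ≤ 1 := by
      refine vecNorm_le_of_sq_le (by norm_num) ?_
      have hw2 : ∑ i, w i ^ 2 ≤ 1 := sum_sq_le_one hw1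
      have hw2nn : (0:ℝ) ≤ ∑ i, w i ^ 2 :=
        Finset.sum_nonneg fun i _ => sq_nonneg _
      rw [hxs]; nlinarith [sq_nonneg b]
    have hGx : G.mulVec x = fun j => a * ((d:ℝ) / Real.sqrt n) + b * g j := by
      have hxe : x = a • e + b • w := by
        funext i; simp [hx, smul_eq_mul]
      rw [hxe, Matrix.mulVec_add, Matrix.mulVec_smul, Matrix.mulVec_smul, hGe, ← hg]
      funext j; simp [smul_eq_mul]
    have hGxsq : ∑ j, (G.mulVec x) j ^ 2 = a^2 * (d:ℝ)^2 + b^2 * ∑ j, g j ^ 2 := by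
      have hterm : ∀ j, (G.mulVec x) j ^ 2 =
          a^2 * ((d:ℝ) / Real.sqrt n)^2 + (2*a*b*((d:ℝ)/Real.sqrt n)) * g j
            + b^2 * g j ^2 := by
        intro j; rw [hGx]; ring
      have hc : (n:ℝ) * ((d:ℝ) / Real.sqrt n)^2 = (d:ℝ)^2 := by
        rw [div_pow, hsq]
        field_simp
      have h1 : ∑ _j : Fin n, a^2 * ((d:ℝ) / Real.sqrt n)^2 = a^2 * (d:ℝ)^2 := by
        rw [Finset.sum_const, Finset.card_univ, Fintype.card_fin, nsmul_eq_mul]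
        linear_combination a^2 * hc
      have h2 : ∑ j, (2*a*b*((d:ℝ)/Real.sqrt n)) * g j = 0 := by
        rw [← Finset.mul_sum, hsumg, mul_zero]
      have h3 : ∑ j, b^2 * g j ^2 = b^2 * ∑ j, g j ^2 := by
        rw [← Finset.mul_sum]
      rw [Finset.sum_congr rfl fun j _ => hterm j, Finset.sum_add_distrib,
        Finset.sum_add_distrib, h1, h2, h3]
      ring
    have hgx : vecNorm g ≤ vecNorm (G.mulVec x) := by
      have hsg : ∑ j, g j ^ 2 = vecNorm g ^ 2 := (vecNorm_sq g).symm
      have hd2 : ∑ j, g j ^ 2 ≤ (d:ℝ)^2 := by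
        rw [hsg]
        exact pow_le_pow_left₀ (vecNorm_nonneg g) hgd 2
      have hle : ∑ j, g j ^ 2 ≤ ∑ j, (G.mulVec x) j ^ 2 := by
        rw [hGxsq]
        have h4 : a^2 * ∑ j, g j ^2 ≤ a^2 * (d:ℝ)^2 :=
          mul_le_mul_of_nonneg_left hd2 (sq_nonneg a)
        have h5 : a^2 = 1 - b^2 := by linarith
        calc ∑ j, g j ^ 2 = (1 - b^2) * ∑ j, g j ^2 + b^2 * ∑ j, g j ^2 := by ring
          _ ≤ a^2 * (d:ℝ)^2 + b^2 * ∑ j, g j ^2 := by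
              rw [← h5]; exact add_le_add_left h4 _
      show Real.sqrt _ ≤ Real.sqrt _
      exact Real.sqrt_le_sqrt hle
    exact le_trans hgx (le_csSup (csupSet_bddAbove G v) ⟨x, hxnorm, hdotvx, rfl⟩)

/-- `‖G t‖ ≤ C√d ‖t‖` for mean-zero `t`. -/
lemma G_meanzero_bound (hn : 0 < n) {d : ℕ} {C : ℝ} (Ω : Finset (Fin n × Fin n))
    (hG1 : AssumptionG1 Ω d) (hG2 : AssumptionG2 Ω d C)
    (t : Fin n → ℝ) (ht : ∑ i, t i = 0) :
    vecNorm ((biadj Ω).mulVec t) ≤ (C * Real.sqrt d) * vecNorm t := by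
  set G := biadj Ω with hGdef
  have hcs : csup G (fun _ => (1:ℝ)) ≤ C * Real.sqrt d := by
    have h1 : csup G (fun _ => (1:ℝ)) ≤ sigma2 G :=
      le_ciInf fun v => csup_one_le hn Ω hG1 v
    exact le_trans h1 hG2
  rcases eq_or_lt_of_le (vecNorm_nonneg t) with h0 | hpos
  · have ht0 := vecNorm_eq_zero h0.symm
    subst ht0
    rw [Matrix.mulVec_zero, vecNorm_zero, mul_zero]
  · set u := (vecNorm t)⁻¹ • t with hu
    have hun : vecNorm u = 1 := by
      rw [hu, vecNorm_smul, abs_of_pos (inv_pos.2 hpos), inv_mul_cancel₀ (ne_of_gt hpos)]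
    have hsumu : ∑ i, (1:ℝ) * u i = 0 := by
      simp only [hu, one_mul, Pi.smul_apply, smul_eq_mul]
      rw [← Finset.mul_sum, ht, mul_zero]
    have hle : vecNorm (G.mulVec u) ≤ C * Real.sqrt d :=
      le_trans (le_csSup (csupSet_bddAbove G _) ⟨u, le_of_eq hun, hsumu, rfl⟩) hcs
    have hGu : G.mulVec u = (vecNorm t)⁻¹ • G.mulVec t := by
      rw [hu, Matrix.mulVec_smul]
    rw [hGu, vecNorm_smul, abs_of_pos (inv_pos.2 hpos)] at hle
    calc vecNorm (G.mulVec t)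
        = vecNorm t * ((vecNorm t)⁻¹ * vecNorm (G.mulVec t)) := by field_simp
      _ ≤ vecNorm t * (C * Real.sqrt d) := mul_le_mul_of_nonneg_left hle (le_of_lt hpos)
      _ = (C * Real.sqrt d) * vecNorm t := mul_comm _ _

/-- Expander mixing inequality. -/
lemma mixing (hn : 0 < n) {d : ℕ} {C : ℝ} (Ω : Finset (Fin n × Fin n))
    (hG1 : AssumptionG1 Ω d) (hG2 : AssumptionG2 Ω d C) (hC : 0 ≤ C)
    (s t : Fin n → ℝ) :
    |dotp s ((biadj Ω).mulVec t) - ((d:ℝ)/(n:ℝ)) * (∑ i, s i) * (∑ j, t j)| ≤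
      (C * Real.sqrt d) * (vecNorm s * vecNorm t) := by
  set G := biadj Ω with hGdef
  have hnR : (0:ℝ) < n := by exact_mod_cast hn
  set m := (∑ j, t j) / n with hm
  set t' := fun j => t j - m with ht'
  have hsumt : ∑ j, t j = n * m := by rw [hm]; field_simp
  have hsumt' : ∑ j, t' j = 0 := by
    simp only [ht']
    rw [Finset.sum_sub_distrib, Finset.sum_const, Finset.card_univ, Fintype.card_fin,
      nsmul_eq_mul, hsumt, sub_self]
  have hdec : G.mulVec t = fun i => G.mulVec t' i + m * d := by
    have hte : t = t' + m • (fun _ => (1:ℝ)) := by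
      funext j; simp [ht', smul_eq_mul]
    rw [hte, Matrix.mulVec_add, Matrix.mulVec_smul, hG1.2.1]
    funext i; simp [smul_eq_mul]; try ring
  have hdot : dotp s (G.mulVec t) = dotp s (G.mulVec t') + m * d * ∑ i, s i := by
    unfold dotp
    rw [hdec]
    have hterm : ∀ i, s i * (G.mulVec t' i + m * d) =
        s i * G.mulVec t' i + (m*d) * s i := by intro i; ring
    rw [Finset.sum_congr rfl fun i _ => hterm i, Finset.sum_add_distrib, ← Finset.mul_sum]
  have hmd : ((d:ℝ)/(n:ℝ)) * (∑ i, s i) * (∑ j, t j) = m * d * ∑ i, s i := by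
    rw [hsumt, hm]
    field_simp
    try ring
  have hkey : dotp s (G.mulVec t) - ((d:ℝ)/(n:ℝ)) * (∑ i, s i) * (∑ j, t j)
      = dotp s (G.mulVec t') := by rw [hdot, hmd]; ring
  rw [hkey]
  have ht'le : vecNorm t' ≤ vecNorm t := by
    have hexp : ∑ j, t' j ^ 2 = ∑ j, t j ^2 - (n:ℝ) * m^2 := by
      have hterm : ∀ j, t' j ^ 2 = t j ^2 - (2*m) * t j + m^2 := by
        intro j; simp only [ht']; ring
      rw [Finset.sum_congr rfl fun j _ => hterm j]
      rw [Finset.sum_add_distrib, Finset.sum_sub_distrib, ← Finset.mul_sum, hsumt,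
        Finset.sum_const, Finset.card_univ, Fintype.card_fin, nsmul_eq_mul]
      ring
    show Real.sqrt _ ≤ Real.sqrt _
    refine Real.sqrt_le_sqrt ?_
    rw [hexp]
    nlinarith [sq_nonneg m]
  calc |dotp s (G.mulVec t')| ≤ vecNorm s * vecNorm (G.mulVec t') := cs_abs _ _
    _ ≤ vecNorm s * ((C * Real.sqrt d) * vecNorm t') := by
        exact mul_le_mul_of_nonneg_left
          (G_meanzero_bound hn Ω hG1 hG2 t' hsumt') (vecNorm_nonneg s)
    _ ≤ vecNorm s * ((C * Real.sqrt d) * vecNorm t) := by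
        have hKnn : 0 ≤ C * Real.sqrt d := mul_nonneg hC (Real.sqrt_nonneg _)
        exact mul_le_mul_of_nonneg_left
          (mul_le_mul_of_nonneg_left ht'le hKnn) (vecNorm_nonneg s)
    _ = (C * Real.sqrt d) * (vecNorm s * vecNorm t) := by ring


lemma dotp_mulVec_expand {n m : ℕ} (u : Fin n → ℝ) (S : Matrix (Fin n) (Fin m) ℝ)
    (w : Fin m → ℝ) :
    dotp u (S.mulVec w) = ∑ i, ∑ j, u i * S i j * w j := by
  unfold dotp Matrix.mulVec dotProduct
  refine Finset.sum_congr rfl fun i _ => ?_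
  rw [Finset.mul_sum]
  exact Finset.sum_congr rfl fun j _ => (mul_assoc _ _ _).symm

lemma dotp_add_right {β : Type*} [Fintype β] (u v w : β → ℝ) :
    dotp u (v + w) = dotp u v + dotp u w := by
  unfold dotp
  rw [← Finset.sum_add_distrib]
  exact Finset.sum_congr rfl fun i _ => by simp [Pi.add_apply]; ring

lemma dotp_sub_right {β : Type*} [Fintype β] (u v w : β → ℝ) :
    dotp u (v - w) = dotp u v - dotp u w := by
  unfold dotp
  rw [← Finset.sum_sub_distrib]
  exact Finset.sum_congr rfl fun i _ => by simp [Pi.sub_apply]; ring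

lemma dotp_smul_right {β : Type*} [Fintype β] (c : ℝ) (u v : β → ℝ) :
    dotp u (c • v) = c * dotp u v := by
  unfold dotp
  rw [Finset.mul_sum]
  exact Finset.sum_congr rfl fun i _ => by simp [Pi.smul_apply, smul_eq_mul]; ring

lemma triple_swap {n r : ℕ} (F : Fin n → Fin n → Fin r → ℝ) :
    ∑ i, ∑ j, ∑ k, F i j k = ∑ k, ∑ i, ∑ j, F i j k := by
  calc ∑ i, ∑ j, ∑ k, F i j k = ∑ i, ∑ k, ∑ j, F i j k :=
        Finset.sum_congr rfl fun i _ => Finset.sum_comm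
    _ = ∑ k, ∑ i, ∑ j, F i j k := Finset.sum_comm

/-- Core per-factor bound. -/
lemma core {n d r : ℕ} (hn : 0 < n) (hd : 0 < d) {K ρ₁ ρ₂ : ℝ}
    (hK : 0 ≤ K) (hρ₁ : 0 ≤ ρ₁) (hρ₂ : 0 ≤ ρ₂)
    (Ω : Finset (Fin n × Fin n))
    (hmix : ∀ s t : Fin n → ℝ,
      |dotp s ((biadj Ω).mulVec t) - ((d:ℝ)/(n:ℝ)) * (∑ i, s i) * (∑ j, t j)| ≤
        K * (vecNorm s * vecNorm t))
    (W P : Matrix (Fin n) (Fin r) ℝ)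
    (hW : ∀ i, ∑ k, W i k ^ 2 ≤ ρ₁) (hP : ∀ j, ∑ k, P j k ^ 2 ≤ ρ₂)
    (a b : Fin n → ℝ) (ha : vecNorm a ≤ 1) (hb : vecNorm b ≤ 1) :
    |dotp a (((((n:ℝ)/(d:ℝ)) • sampl Ω (W * Pᵀ) - W * Pᵀ)).mulVec b)| ≤
      ((n:ℝ)/(d:ℝ)) * K * (Real.sqrt ρ₁ * Real.sqrt ρ₂) := by
  have hnR : (0:ℝ) < n := by exact_mod_cast hn
  have hdR : (0:ℝ) < d := by exact_mod_cast hd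
  set G := biadj Ω with hGdef
  set s : Fin r → Fin n → ℝ := fun k i => a i * W i k with hs
  set t : Fin r → Fin n → ℝ := fun k j => b j * P j k with ht
  -- expansion of the sampled part
  have I1 : dotp a ((sampl Ω (W * Pᵀ)).mulVec b) =
      ∑ k, dotp (s k) (G.mulVec (t k)) := by
    rw [dotp_mulVec_expand]
    have step1 : ∀ i j, a i * (sampl Ω (W * Pᵀ)) i j * b j =
        ∑ k, s k i * G i j * t k j := by
      intro i j
      by_cases hmem : (i, j) ∈ Ω
      · have h1 : (sampl Ω (W * Pᵀ)) i j = ∑ k, W i k * P j k := by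
          simp [sampl, hmem, Matrix.mul_apply, Matrix.transpose_apply]
        have h2 : G i j = 1 := by simp [hGdef, biadj, hmem]
        rw [h1, h2, Finset.mul_sum, Finset.sum_mul]
        exact Finset.sum_congr rfl fun k _ => by simp only [hs, ht]; ring
      · have h1 : (sampl Ω (W * Pᵀ)) i j = 0 := by simp [sampl, hmem]
        have h2 : G i j = 0 := by simp [hGdef, biadj, hmem]
        rw [h1, h2]
        simp
    rw [Finset.sum_congr rfl fun i _ => Finset.sum_congr rfl fun j _ => step1 i j]
    rw [triple_swap]
    exact Finset.sum_congr rfl fun k _ => (dotp_mulVec_expand (s k) G (t k)).symm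
  -- expansion of the unsampled part
  have I2 : dotp a ((W * Pᵀ).mulVec b) =
      ∑ k, (∑ i, s k i) * (∑ j, t k j) := by
    rw [dotp_mulVec_expand]
    have step1 : ∀ i j, a i * (W * Pᵀ) i j * b j = ∑ k, s k i * t k j := by
      intro i j
      rw [Matrix.mul_apply, Finset.mul_sum, Finset.sum_mul]
      exact Finset.sum_congr rfl fun k _ => by
        simp only [hs, ht, Matrix.transpose_apply]; ring
    rw [Finset.sum_congr rfl fun i _ => Finset.sum_congr rfl fun j _ => step1 i j]
    rw [triple_swap]
    exact Finset.sum_congr rfl fun k _ => by rw [Finset.sum_mul_sum]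
  -- putting together
  have I0 : dotp a (((((n:ℝ)/(d:ℝ)) • sampl Ω (W * Pᵀ) - W * Pᵀ)).mulVec b) =
      ∑ k, (((n:ℝ)/(d:ℝ)) * dotp (s k) (G.mulVec (t k))
        - (∑ i, s k i) * (∑ j, t k j)) := by
    rw [Matrix.sub_mulVec, Matrix.smul_mulVec, dotp_sub_right, dotp_smul_right,
      I1, I2, Finset.mul_sum, ← Finset.sum_sub_distrib]
  rw [I0]
  have hterm : ∀ k, |((n:ℝ)/(d:ℝ)) * dotp (s k) (G.mulVec (t k))
      - (∑ i, s k i) * (∑ j, t k j)| ≤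
      ((n:ℝ)/(d:ℝ)) * (K * (vecNorm (s k) * vecNorm (t k))) := by
    intro k
    have hrw : ((n:ℝ)/(d:ℝ)) * dotp (s k) (G.mulVec (t k))
        - (∑ i, s k i) * (∑ j, t k j) =
        ((n:ℝ)/(d:ℝ)) * (dotp (s k) (G.mulVec (t k))
          - ((d:ℝ)/(n:ℝ)) * (∑ i, s k i) * (∑ j, t k j)) := by
      field_simp
    rw [hrw, abs_mul, abs_of_pos (div_pos hnR hdR)]
    exact mul_le_mul_of_nonneg_left (hmix (s k) (t k)) (le_of_lt (div_pos hnR hdR))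
  calc |∑ k, (((n:ℝ)/(d:ℝ)) * dotp (s k) (G.mulVec (t k))
        - (∑ i, s k i) * (∑ j, t k j))|
      ≤ ∑ k, |((n:ℝ)/(d:ℝ)) * dotp (s k) (G.mulVec (t k))
        - (∑ i, s k i) * (∑ j, t k j)| := Finset.abs_sum_le_sum_abs _ _
    _ ≤ ∑ k, ((n:ℝ)/(d:ℝ)) * (K * (vecNorm (s k) * vecNorm (t k))) :=
        Finset.sum_le_sum fun k _ => hterm k
    _ = ((n:ℝ)/(d:ℝ)) * K * ∑ k, vecNorm (s k) * vecNorm (t k) := by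
        rw [Finset.mul_sum]
        refine (Finset.sum_congr rfl fun k _ => ?_)
        ring
    _ ≤ ((n:ℝ)/(d:ℝ)) * K * (Real.sqrt ρ₁ * Real.sqrt ρ₂) := by
        refine mul_le_mul_of_nonneg_left ?_
          (mul_nonneg (le_of_lt (div_pos hnR hdR)) hK)
        have hsk : ∀ k, vecNorm (s k) = Real.sqrt (∑ i, (s k i) ^ 2) := fun k => rfl
        have htk : ∀ k, vecNorm (t k) = Real.sqrt (∑ j, (t k j) ^ 2) := fun k => rfl
        calc ∑ k, vecNorm (s k) * vecNorm (t k)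
            = ∑ k, Real.sqrt (∑ i, (s k i) ^ 2) * Real.sqrt (∑ j, (t k j) ^ 2) :=
              Finset.sum_congr rfl fun k _ => by rw [hsk, htk]
          _ ≤ Real.sqrt (∑ k, ∑ i, (s k i) ^ 2) * Real.sqrt (∑ k, ∑ j, (t k j) ^ 2) :=
              sum_sqrt_prod_le _ _
                (fun k => Finset.sum_nonneg fun i _ => sq_nonneg _)
                (fun k => Finset.sum_nonneg fun j _ => sq_nonneg _)
          _ ≤ Real.sqrt ρ₁ * Real.sqrt ρ₂ := by
              have hsum1 : ∑ k, ∑ i, (s k i) ^ 2 ≤ ρ₁ := by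
                rw [Finset.sum_comm]
                have hrow : ∀ i, ∑ k, (s k i) ^ 2 ≤ a i ^ 2 * ρ₁ := by
                  intro i
                  have : ∀ k, (s k i) ^ 2 = a i ^ 2 * W i k ^ 2 := by
                    intro k; simp only [hs]; ring
                  rw [Finset.sum_congr rfl fun k _ => this k, ← Finset.mul_sum]
                  exact mul_le_mul_of_nonneg_left (hW i) (sq_nonneg _)
                calc ∑ i, ∑ k, (s k i) ^ 2 ≤ ∑ i, a i ^ 2 * ρ₁ :=
                      Finset.sum_le_sum fun i _ => hrow i
                  _ = (∑ i, a i ^ 2) * ρ₁ := by rw [Finset.sum_mul]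
                  _ ≤ 1 * ρ₁ := mul_le_mul_of_nonneg_right (sum_sq_le_one ha) hρ₁
                  _ = ρ₁ := one_mul _
              have hsum2 : ∑ k, ∑ j, (t k j) ^ 2 ≤ ρ₂ := by
                rw [Finset.sum_comm]
                have hrow : ∀ j, ∑ k, (t k j) ^ 2 ≤ b j ^ 2 * ρ₂ := by
                  intro j
                  have : ∀ k, (t k j) ^ 2 = b j ^ 2 * P j k ^ 2 := by
                    intro k; simp only [ht]; ring
                  rw [Finset.sum_congr rfl fun k _ => this k, ← Finset.mul_sum]
                  exact mul_le_mul_of_nonneg_left (hP j) (sq_nonneg _)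
                calc ∑ j, ∑ k, (t k j) ^ 2 ≤ ∑ j, b j ^ 2 * ρ₂ :=
                      Finset.sum_le_sum fun j _ => hrow j
                  _ = (∑ j, b j ^ 2) * ρ₂ := by rw [Finset.sum_mul]
                  _ ≤ 1 * ρ₂ := mul_le_mul_of_nonneg_right (sum_sq_le_one hb) hρ₂
                  _ = ρ₂ := one_mul _
              exact mul_le_mul (Real.sqrt_le_sqrt hsum1) (Real.sqrt_le_sqrt hsum2)
                (Real.sqrt_nonneg _) (Real.sqrt_nonneg _)

end Aux

open Aux in
/-- Lemma 2: spectral-norm bound for incoherent `Z ∈ T`. -/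
theorem stmt_10 {n d r : ℕ} (hn : 0 < n) (hd : 0 < d) (hr : 0 < r)
    {C μ₀ c₁ c₂ : ℝ} (hC : 0 < C) (hc₁ : 0 ≤ c₁) (hc₂ : 0 ≤ c₂)
    (U V : Matrix (Fin n) (Fin r) ℝ) (hU : Uᵀ * U = 1) (hV : Vᵀ * V = 1)
    (hA1U : IncoherentRows U μ₀) (hA1V : IncoherentRows V μ₀)
    (X Y : Matrix (Fin n) (Fin r) ℝ) (hUY : Uᵀ * Y = 0)
    (hX : ∀ i : Fin n, (∑ k, X i k ^ 2) ≤ c₁ ^ 2 * μ₀ * r / n)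
    (hY : ∀ j : Fin n, (∑ k, Y j k ^ 2) ≤ c₂ ^ 2 * μ₀ * r / n)
    (Ω : Finset (Fin n × Fin n)) (hreg : RegularSampling Ω d)
    (hG1 : AssumptionG1 Ω d) (hG2 : AssumptionG2 Ω d C) :
    specNorm (((n : ℝ) / (d : ℝ)) • sampl Ω (U * Xᵀ + Y * Vᵀ) - (U * Xᵀ + Y * Vᵀ)) ≤
      (c₁ + c₂) * C * μ₀ * r / Real.sqrt d := by
  
  have hnR : (0:ℝ) < n := by exact_mod_cast hn
  have hdR : (0:ℝ) < d := by exact_mod_cast hd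
  have hrR : (0:ℝ) < r := by exact_mod_cast hr
  have hμ : 0 ≤ μ₀ := by
    have h1 := hA1U ⟨0, hn⟩
    have h2 : (0:ℝ) ≤ ∑ k, U ⟨0, hn⟩ k ^ 2 := Finset.sum_nonneg fun k _ => sq_nonneg _
    have h3 : 0 ≤ μ₀ * r / n := le_trans h2 h1
    by_contra hcon
    push_neg at hcon
    have : μ₀ * r / n < 0 :=
      div_neg_of_neg_of_pos (mul_neg_of_neg_of_pos hcon hrR) hnR
    linarith
  set K := C * Real.sqrt d with hK
  have hKnn : 0 ≤ K := mul_nonneg hC.le (Real.sqrt_nonneg _)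
  have hmix := mixing hn Ω hG1 hG2 hC.le
  have hρU : (0:ℝ) ≤ μ₀ * r / n := by positivity
  have hρX : (0:ℝ) ≤ c₁^2 * μ₀ * r / n := by positivity
  have hρY : (0:ℝ) ≤ c₂^2 * μ₀ * r / n := by positivity
  have hBnn : 0 ≤ (c₁ + c₂) * C * μ₀ * r / Real.sqrt d :=
    div_nonneg (by positivity) (Real.sqrt_nonneg _)
  refine specNorm_le_of _ hBnn ?_
  intro x hx
  set M := (((n:ℝ)/(d:ℝ)) • sampl Ω (U * Xᵀ + Y * Vᵀ) - (U * Xᵀ + Y * Vᵀ)) with hM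
  have hsplit : M = (((n:ℝ)/(d:ℝ)) • sampl Ω (U * Xᵀ) - U * Xᵀ) +
      (((n:ℝ)/(d:ℝ)) • sampl Ω (Y * Vᵀ) - Y * Vᵀ) := by
    ext i j
    simp only [hM, sampl, Matrix.sub_apply, Matrix.add_apply, Matrix.smul_apply,
      smul_eq_mul, Matrix.of_apply]
    split_ifs <;> ring
  set y := M.mulVec x with hy
  rcases eq_or_lt_of_le (vecNorm_nonneg y) with h0 | hpos
  · exact h0 ▸ hBnn
  · set av := (vecNorm y)⁻¹ • y with hav
    have hanorm : vecNorm av = 1 := by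
      rw [hav, vecNorm_smul, abs_of_pos (inv_pos.2 hpos),
        inv_mul_cancel₀ (ne_of_gt hpos)]
    have hyval : dotp av y = vecNorm y := by
      have hterm : ∀ i, av i * y i = (vecNorm y)⁻¹ * y i ^ 2 := by
        intro i; simp [hav, Pi.smul_apply, smul_eq_mul]; ring
      have h1 : dotp av y = (vecNorm y)⁻¹ * ∑ i, y i ^ 2 := by
        unfold dotp
        rw [Finset.sum_congr rfl fun i _ => hterm i, ← Finset.mul_sum]
      rw [h1, ← vecNorm_sq y, sq]
      field_simp
    have hdsplit : dotp av y =
        dotp av (((((n:ℝ)/(d:ℝ)) • sampl Ω (U * Xᵀ) - U * Xᵀ)).mulVec x) +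
        dotp av (((((n:ℝ)/(d:ℝ)) • sampl Ω (Y * Vᵀ) - Y * Vᵀ)).mulVec x) := by
      rw [hy, hsplit, Matrix.add_mulVec, dotp_add_right]
    have hb1 := core hn hd hKnn hρU hρX Ω hmix U X hA1U hX av x (le_of_eq hanorm) hx
    have hb2 := core hn hd hKnn hρY hρU Ω hmix Y V hY hA1V av x (le_of_eq hanorm) hx
    have hsq1 : Real.sqrt (μ₀ * r / n) * Real.sqrt (c₁^2 * μ₀ * r / n)
        = c₁ * (μ₀ * r / n) := by
      rw [← Real.sqrt_mul hρU]
      have : (μ₀ * r / n) * (c₁^2 * μ₀ * r / n) = (c₁ * (μ₀ * r / n))^2 := by ring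
      rw [this, Real.sqrt_sq (by positivity)]
    have hsq2 : Real.sqrt (c₂^2 * μ₀ * r / n) * Real.sqrt (μ₀ * r / n)
        = c₂ * (μ₀ * r / n) := by
      rw [← Real.sqrt_mul hρY]
      have : (c₂^2 * μ₀ * r / n) * (μ₀ * r / n) = (c₂ * (μ₀ * r / n))^2 := by ring
      rw [this, Real.sqrt_sq (by positivity)]
    rw [hsq1] at hb1
    rw [hsq2] at hb2
    have hfinal : ((n:ℝ)/(d:ℝ)) * K * (c₁ * (μ₀ * r / n)) +
        ((n:ℝ)/(d:ℝ)) * K * (c₂ * (μ₀ * r / n)) =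
        (c₁ + c₂) * C * μ₀ * r / Real.sqrt d := by
      have hsd : (0:ℝ) < Real.sqrt d := Real.sqrt_pos.2 hdR
      have hss : Real.sqrt d * Real.sqrt d = (d:ℝ) := Real.mul_self_sqrt hdR.le
      rw [hK]
      field_simp
      ring_nf
      rw [Real.sq_sqrt hdR.le]
      ring
    calc vecNorm y = dotp av y := hyval.symm
      _ = _ + _ := hdsplit
      _ ≤ |dotp av (((((n:ℝ)/(d:ℝ)) • sampl Ω (U * Xᵀ) - U * Xᵀ)).mulVec x)| +
          |dotp av (((((n:ℝ)/(d:ℝ)) • sampl Ω (Y * Vᵀ) - Y * Vᵀ)).mulVec x)| :=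
            add_le_add (le_abs_self _) (le_abs_self _)
      _ ≤ ((n:ℝ)/(d:ℝ)) * K * (c₁ * (μ₀ * r / n)) +
          ((n:ℝ)/(d:ℝ)) * K * (c₂ * (μ₀ * r / n)) := add_le_add hb1 hb2
      _ = (c₁ + c₂) * C * μ₀ * r / Real.sqrt d := hfinal
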